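/- Let G be a graph and Δ > 1. Then there exists a partition V(G) = X* ∪ X₁ ∪ ⋯ ∪ X_t such that |X*| ≤ 32(|V(G)|/Δ)², there are no edges between Xᵢ and Xⱼ for i ≠ j, and the diameter of the induced subgraph G[Xᵢ] is at most Δ for every i ∈ {1, …, t}. -/

import Mathlib

open Classical

set_option linter.unusedSectionVars false
set_option linter.unusedVariables false
set_option maxHeartbeats 1000000

namespace WeakReg

variable {V : Type*} [Fintype V] [DecidableEq V]

/-- Restriction of `G` to vertices in `S`, as a graph on `V`. -/
def restrict (G : SimpleGraph V) (S : Finset V) : SimpleGraph V where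
  Adj a b := G.Adj a b ∧ a ∈ S ∧ b ∈ S
  symm := ⟨fun a b ⟨h, ha, hb⟩ => ⟨h.symm, hb, ha⟩⟩
  loopless := ⟨fun a ⟨h, _, _⟩ => G.ne_of_adj h rfl⟩

lemma restrict_support_mem {G : SimpleGraph V} {S : Finset V} :
    ∀ {a b : V}, a ∈ S → ∀ (p : (restrict G S).Walk a b), ∀ x ∈ p.support, x ∈ S := by
  intro a b ha p
  induction p with
  | nil => intro x hx; simp only [SimpleGraph.Walk.support_nil, List.mem_singleton] at hx; subst hx; exact ha
  | cons h p ih =>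
    intro x hx
    rw [SimpleGraph.Walk.support_cons, List.mem_cons] at hx
    rcases hx with rfl | hx
    · exact ha
    · exact ih h.2.2 x hx

lemma dist_support_le {G' : SimpleGraph V} {v a : V} (p : G'.Walk v a) :
    ∀ x ∈ p.support, G'.dist v x ≤ p.length := fun x hx =>
  le_trans (SimpleGraph.dist_le (p.takeUntil x hx)) (SimpleGraph.Walk.length_takeUntil_le p hx)

lemma reachable_support {G' : SimpleGraph V} {v a : V} (p : G'.Walk v a) :
    ∀ x ∈ p.support, G'.Reachable v x := fun x hx => ⟨p.takeUntil x hx⟩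

lemma exists_dist_eq (G' : SimpleGraph V) (v : V) :
    ∀ (d : ℕ) (u : V), G'.Reachable v u → G'.dist v u = d →
      ∀ i ≤ d, ∃ w, G'.Reachable v w ∧ G'.dist v w = i := by
  intro d
  induction d with
  | zero =>
    intro u _ _ i hi
    have : i = 0 := Nat.le_zero.mp hi
    exact ⟨v, SimpleGraph.Reachable.refl v, by simp [this, SimpleGraph.dist_self]⟩
  | succ d ih =>
    intro u hu hd i hi
    rcases Nat.lt_or_ge i (d + 1) with hlt | hge
    · obtain ⟨p, hp⟩ := hu.exists_walk_length_eq_dist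
      have hne : v ≠ u := by
        rintro rfl
        rw [SimpleGraph.dist_self] at hd; omega
      obtain ⟨w, hadj, q, hq⟩ := SimpleGraph.Walk.exists_eq_cons_of_ne (Ne.symm hne) p.reverse
      have hqlen : q.length = d := by
        have := congrArg SimpleGraph.Walk.length hq
        rw [SimpleGraph.Walk.length_reverse, SimpleGraph.Walk.length_cons, hp, hd] at this
        omega
      have hrw : G'.Reachable v w := ⟨q.reverse⟩
      have hdw : G'.dist v w = d := by
        have h1 : G'.dist v w ≤ d := by
          have := SimpleGraph.dist_le q.reverse
          rwa [SimpleGraph.Walk.length_reverse, hqlen] at this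
        have h2 : d ≤ G'.dist v w := by
          obtain ⟨sp, hsp⟩ := hrw.exists_walk_length_eq_dist
          have := SimpleGraph.dist_le (sp.concat hadj.symm)
          rw [SimpleGraph.Walk.length_concat, hsp, hd] at this
          omega
        omega
      exact ih w hrw hdw i (by omega)
    · have : i = d + 1 := by omega
      exact this ▸ ⟨u, hu, hd⟩

lemma exists_induce_walk (G : SimpleGraph V) {G' : SimpleGraph V}
    (hle : ∀ ⦃a b⦄, G'.Adj a b → G.Adj a b) {X : Finset V} :
    ∀ {a b : V} (p : G'.Walk a b) (ha : a ∈ X) (hb : b ∈ X),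
      (∀ x ∈ p.support, x ∈ X) →
      ∃ q : (G.induce (X : Set V)).Walk ⟨a, ha⟩ ⟨b, hb⟩, q.length = p.length := by
  intro a b p
  induction p with
  | nil => intro ha hb _; exact ⟨.nil, rfl⟩
  | @cons a c b h p ih =>
    intro ha hb hsup
    have hc : c ∈ X := hsup c (by simp [SimpleGraph.Walk.support_cons])
    obtain ⟨q, hq⟩ := ih hc hb (fun x hx => hsup x (by simp [SimpleGraph.Walk.support_cons, hx]))
    have hadj : (G.induce (X : Set V)).Adj ⟨a, ha⟩ ⟨c, hc⟩ := by
      simp only [SimpleGraph.induce, SimpleGraph.comap_adj, Function.Embedding.coe_subtype]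
      exact hle h
    exact ⟨.cons hadj q, by simp [hq]⟩

lemma mem_foldr_union (l : List (Finset V)) (x : V) :
    x ∈ l.foldr (· ∪ ·) ∅ ↔ ∃ X ∈ l, x ∈ X := by
  induction l with
  | nil => simp
  | cons X l ih => simp [ih]

lemma cluster_good (G : SimpleGraph V) {S : Finset V} {v : V} (hv : v ∈ S) (m : ℕ) (Δ : ℝ)
    (hm : 2 * (m : ℝ) ≤ Δ) {X : Finset V}
    (hX : X = S.filter (fun w => (restrict G S).Reachable v w ∧ (restrict G S).dist v w ≤ m)) :
    ∀ u w : ((X : Set V)), ∃ q : (G.induce (X : Set V)).Walk u w, (q.length : ℝ) ≤ Δ := by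
  rintro ⟨a, ha⟩ ⟨b, hb⟩
  have hu : a ∈ X := ha
  have hw : b ∈ X := hb
  rw [hX, Finset.mem_filter] at hu hw
  obtain ⟨huS, hur, hud⟩ := hu
  obtain ⟨hwS, hwr, hwd⟩ := hw
  obtain ⟨pa, hpa⟩ := hur.exists_walk_length_eq_dist
  obtain ⟨pb, hpb⟩ := hwr.exists_walk_length_eq_dist
  have hsup : ∀ x ∈ (pa.reverse.append pb).support, x ∈ X := by
    intro x hx
    rw [SimpleGraph.Walk.mem_support_append_iff] at hx
    have hx' : x ∈ pa.support ∨ x ∈ pb.support := by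
      rcases hx with hx | hx
      · left; rw [SimpleGraph.Walk.support_reverse, List.mem_reverse] at hx; exact hx
      · right; exact hx
    rw [hX, Finset.mem_filter]
    rcases hx' with hx | hx
    · exact ⟨restrict_support_mem hv pa x hx, reachable_support pa x hx,
        le_trans (dist_support_le pa x hx) (by rw [hpa]; exact hud)⟩
    · exact ⟨restrict_support_mem hv pb x hx, reachable_support pb x hx,
        le_trans (dist_support_le pb x hx) (by rw [hpb]; exact hwd)⟩
  obtain ⟨q, hq⟩ := exists_induce_walk G (fun a b (h : (restrict G S).Adj a b) => h.1) (pa.reverse.append pb) ha hb hsup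
  refine ⟨q, ?_⟩
  rw [hq]
  have hlen : (pa.reverse.append pb).length = pa.length + pb.length := by
    rw [SimpleGraph.Walk.length_append, SimpleGraph.Walk.length_reverse]
  rw [hlen, hpa, hpb]
  push_cast
  have hca : (((restrict G S).dist v a : ℕ) : ℝ) ≤ m := by exact_mod_cast hud
  have hcb : (((restrict G S).dist v b : ℕ) : ℝ) ≤ m := by exact_mod_cast hwd
  linarith

/-- The symmetric-ish relation between parts. -/
def Rel (G : SimpleGraph V) (X Y : Finset V) : Prop :=
  Disjoint X Y ∧ ∀ u ∈ X, ∀ w ∈ Y, ¬ G.Adj u w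

lemma main (G : SimpleGraph V) (Δ : ℝ) (hΔ : 1 < Δ)
    (hbig : 32 * (Fintype.card V : ℝ) < Δ ^ 2) (S : Finset V) :
    ∃ (L : List (Finset V)) (Xstar : Finset V),
      ((Xstar.card : ℝ) * Δ ^ 2 ≤ 32 * (Fintype.card V : ℝ) * S.card) ∧
      Xstar ⊆ S ∧
      (∀ X ∈ L, X ⊆ S) ∧
      (∀ X ∈ L, Disjoint Xstar X) ∧
      List.Pairwise (Rel G) L ∧
      (Xstar ∪ L.foldr (· ∪ ·) ∅ = S) ∧
      (∀ X ∈ L, ∀ u w : ((X : Set V)),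
        ∃ q : (G.induce (X : Set V)).Walk u w, (q.length : ℝ) ≤ Δ) := by
  induction S using Finset.strongInduction with
  | _ S ih =>
  rcases S.eq_empty_or_nonempty with rfl | ⟨v, hv⟩
  · exact ⟨[], ∅, by simp, by simp, by simp, by simp, by simp, by simp, by simp⟩
  have hΔpos : (0 : ℝ) < Δ := lt_trans one_pos hΔ
  set r' : ℕ := ⌊Δ / 2⌋₊ with hr'
  have h2r' : 2 * (r' : ℝ) ≤ Δ := by
    have := Nat.floor_le (by positivity : (0:ℝ) ≤ Δ / 2)
    rw [← hr'] at this
    linarith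
  by_cases hcase : ∀ w ∈ S, (restrict G S).Reachable v w → (restrict G S).dist v w ≤ r'
  -- Case 1: the whole component of v has radius ≤ r'
  · set C := S.filter (fun w => (restrict G S).Reachable v w ∧ (restrict G S).dist v w ≤ r') with hC
    have hCS : C ⊆ S := Finset.filter_subset _ _
    have hvC : v ∈ C := by
      rw [hC, Finset.mem_filter]
      exact ⟨hv, SimpleGraph.Reachable.refl v, by rw [SimpleGraph.dist_self]; omega⟩
    have hclose : ∀ x ∈ C, ∀ w ∈ S, G.Adj x w → w ∈ C := by
      intro x hx w hw hadj
      rw [hC, Finset.mem_filter] at hx ⊢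
      obtain ⟨hxS, hreach, _⟩ := hx
      have hadj' : (restrict G S).Adj x w := ⟨hadj, hxS, hw⟩
      have hrw : (restrict G S).Reachable v w := hreach.trans ⟨hadj'.toWalk⟩
      exact ⟨hw, hrw, hcase w hw hrw⟩
    obtain ⟨L, Xs, hb1, hb2, hb3, hb4, hb5, hb6, hb7⟩ :=
      ih (S \ C) (Finset.sdiff_ssubset hCS ⟨v, hvC⟩)
    refine ⟨C :: L, Xs, ?_, ?_, ?_, ?_, ?_, ?_, ?_⟩
    · refine le_trans hb1 ?_
      have h1 : ((S \ C).card : ℝ) ≤ (S.card : ℝ) := by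
        exact_mod_cast Finset.card_le_card (Finset.sdiff_subset)
      have h2 : (0:ℝ) ≤ 32 * (Fintype.card V : ℝ) := by positivity
      exact mul_le_mul_of_nonneg_left h1 h2
    · exact hb2.trans Finset.sdiff_subset
    · intro X hX
      rcases List.mem_cons.mp hX with rfl | hX
      · exact hCS
      · exact (hb3 X hX).trans Finset.sdiff_subset
    · intro X hX
      rcases List.mem_cons.mp hX with rfl | hX
      · exact Finset.disjoint_left.mpr fun a haXs haC => (Finset.mem_sdiff.mp (hb2 haXs)).2 haC
      · exact hb4 X hX
    · refine List.Pairwise.cons ?_ hb5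
      intro Y hY
      refine ⟨Finset.disjoint_left.mpr fun a haC haY => (Finset.mem_sdiff.mp ((hb3 Y hY) haY)).2 haC, ?_⟩
      intro x hx w hw hadj
      have hwS : w ∈ S \ C := hb3 Y hY hw
      exact (Finset.mem_sdiff.mp hwS).2 (hclose x hx w (Finset.mem_sdiff.mp hwS).1 hadj)
    · ext x
      simp only [List.foldr_cons, Finset.mem_union]
      have h6x := Finset.ext_iff.mp hb6 x
      simp only [Finset.mem_union, Finset.mem_sdiff] at h6x
      have hxC : x ∈ C → x ∈ S := fun hx => hCS hx
      tauto
    · intro X hX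
      rcases List.mem_cons.mp hX with rfl | hX
      · exact cluster_good G hv r' Δ h2r' hC
      · exact hb7 X hX
  -- Case 2
  · push_neg at hcase
    obtain ⟨u, huS, hurch, hur⟩ := hcase
    have hune : u ≠ v := by
      rintro rfl
      rw [SimpleGraph.dist_self] at hur; omega
    have hn2 : 2 ≤ Fintype.card V := by
      have hc : ({u, v} : Finset V).card = 2 := Finset.card_pair hune
      calc 2 = ({u, v} : Finset V).card := hc.symm
        _ ≤ Finset.univ.card := Finset.card_le_univ _
        _ = Fintype.card V := Finset.card_univ
    have hn2R : (2 : ℝ) ≤ (Fintype.card V : ℝ) := by exact_mod_cast hn2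
    have hΔ8 : (8 : ℝ) < Δ := by nlinarith
    have hr'lb : Δ / 2 - 1 < (r' : ℝ) := by
      have := Nat.lt_floor_add_one (Δ / 2)
      rw [← hr'] at this
      linarith
    have hr4 : 4 ≤ r' := by
      have h3 : (3 : ℝ) < (r' : ℝ) := by linarith
      exact_mod_cast (by exact_mod_cast h3 : 3 < r')
    set h := r' / 2 with hh
    have hhr : h + 1 ≤ r' := by omega
    have hhle : h ≤ r' := by omega
    set Lsp : ℕ → Finset V :=
      fun i => S.filter (fun w => (restrict G S).Reachable v w ∧ (restrict G S).dist v w = i)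
      with hLsp
    have hLd : ∀ i j : ℕ, i ≠ j → Disjoint (Lsp i) (Lsp j) := by
      intro i j hij
      rw [Finset.disjoint_left]
      intro a hai haj
      rw [hLsp] at hai haj
      simp only [Finset.mem_filter] at hai haj
      exact hij (hai.2.2 ▸ haj.2.2 ▸ rfl)
    set T := Finset.Icc (h + 1) r' with hT
    have hTne : T.Nonempty := ⟨h + 1, Finset.mem_Icc.mpr ⟨le_rfl, hhr⟩⟩
    obtain ⟨j, hjT, hjmin⟩ := Finset.exists_min_image T (fun i => (Lsp i).card) hTne
    obtain ⟨hj1, hjr⟩ := Finset.mem_Icc.mp hjT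
    have hj0 : 1 ≤ j := by omega
    set K := S.filter (fun w => (restrict G S).Reachable v w ∧ (restrict G S).dist v w ≤ j - 1)
      with hK
    have hKS : K ⊆ S := Finset.filter_subset _ _
    have hvK : v ∈ K := by
      rw [hK, Finset.mem_filter]
      exact ⟨hv, SimpleGraph.Reachable.refl v, by rw [SimpleGraph.dist_self]; omega⟩
    have hKL : Disjoint K (Lsp j) := by
      rw [Finset.disjoint_left]
      intro a haK haL
      rw [hK, Finset.mem_filter] at haK
      rw [hLsp] at haL
      simp only [Finset.mem_filter] at haL
      have := haK.2.2
      rw [haL.2.2] at this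
      omega
    have hclose : ∀ x ∈ K, ∀ w ∈ S, G.Adj x w → w ∈ K ∪ Lsp j := by
      intro x hx w hw hadj
      rw [hK, Finset.mem_filter] at hx
      obtain ⟨hxS, hreach, hxd⟩ := hx
      have hadj' : (restrict G S).Adj x w := ⟨hadj, hxS, hw⟩
      have hrw : (restrict G S).Reachable v w := hreach.trans ⟨hadj'.toWalk⟩
      obtain ⟨sp, hsp⟩ := hreach.exists_walk_length_eq_dist
      have hdw : (restrict G S).dist v w ≤ (restrict G S).dist v x + 1 := by
        have := SimpleGraph.dist_le (sp.concat hadj')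
        rwa [SimpleGraph.Walk.length_concat, hsp] at this
      rcases Nat.lt_or_ge ((restrict G S).dist v w) j with hlt | hge
      · exact Finset.mem_union_left _ (by
          rw [hK, Finset.mem_filter]; exact ⟨hw, hrw, by omega⟩)
      · refine Finset.mem_union_right _ ?_
        rw [hLsp]
        simp only [Finset.mem_filter]
        exact ⟨hw, hrw, by omega⟩
    -- K has at least j vertices
    have hexd : ∀ i : Fin j, ∃ w, (restrict G S).Reachable v w ∧ (restrict G S).dist v w = i.1 := by
      intro i
      refine exists_dist_eq (restrict G S) v ((restrict G S).dist v u) u hurch rfl i.1 ?_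
      have := i.2
      omega
    choose f hf1 hf2 using hexd
    have hfK : ∀ i : Fin j, f i ∈ K := by
      intro i
      have hfS : f i ∈ S := by
        refine (hf1 i).elim fun p => restrict_support_mem hv p _ (SimpleGraph.Walk.end_mem_support p)
      rw [hK, Finset.mem_filter]
      refine ⟨hfS, hf1 i, ?_⟩
      rw [hf2 i]
      have := i.2
      omega
    have hcardK : j ≤ K.card := by
      have hinj : Set.InjOn f (Finset.univ : Finset (Fin j)) := by
        intro i _ i' _ hEq
        have : (i.1 : ℕ) = i'.1 := by rw [← hf2 i, ← hf2 i', hEq]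
        exact Fin.ext this
      have := Finset.card_le_card_of_injOn f (fun i _ => hfK i) hinj
      simpa using this
    -- the chosen sphere is small
    have hspan : (Lsp j).card * (r' - h) ≤ Fintype.card V := by
      have hbu : (T.biUnion Lsp).card = ∑ i ∈ T, (Lsp i).card :=
        Finset.card_biUnion (fun x _ y _ hxy => hLd x y hxy)
      have hsum : T.card * (Lsp j).card ≤ ∑ i ∈ T, (Lsp i).card := by
        calc T.card * (Lsp j).card = ∑ _i ∈ T, (Lsp j).card := by
              rw [Finset.sum_const, smul_eq_mul]
          _ ≤ ∑ i ∈ T, (Lsp i).card := Finset.sum_le_sum (fun i hi => hjmin i hi)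
      have hTcard : T.card = r' - h := by rw [hT, Nat.card_Icc]; omega
      calc (Lsp j).card * (r' - h) = T.card * (Lsp j).card := by rw [hTcard, Nat.mul_comm]
        _ ≤ ∑ i ∈ T, (Lsp i).card := hsum
        _ = (T.biUnion Lsp).card := hbu.symm
        _ ≤ Finset.univ.card := Finset.card_le_univ _
        _ = Fintype.card V := Finset.card_univ
    -- key numeric inequality
    have hcast1 : 2 * (h : ℝ) ≤ (r' : ℝ) := by exact_mod_cast (by omega : 2 * h ≤ r')
    have hcast2 : (r' : ℝ) ≤ 2 * (h : ℝ) + 1 := by exact_mod_cast (by omega : r' ≤ 2 * h + 1)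
    have hkey : Δ ^ 2 ≤ 32 * ((h : ℝ) + 1) * ((r' : ℝ) - (h : ℝ)) := by nlinarith
    -- set up recursion
    have hKLS : K ∪ Lsp j ⊆ S :=
      Finset.union_subset hKS (Finset.filter_subset _ _)
    obtain ⟨L, Xs, hb1, hb2, hb3, hb4, hb5, hb6, hb7⟩ :=
      ih (S \ (K ∪ Lsp j)) (Finset.sdiff_ssubset hKLS ⟨v, Finset.mem_union_left _ hvK⟩)
    refine ⟨K :: L, Lsp j ∪ Xs, ?_, ?_, ?_, ?_, ?_, ?_, ?_⟩
    · -- cardinality bound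
      have hcard_union : ((Lsp j ∪ Xs).card : ℝ) ≤ ((Lsp j).card : ℝ) + (Xs.card : ℝ) := by
        exact_mod_cast Finset.card_union_le _ _
      have hS' : ((S \ (K ∪ Lsp j)).card : ℝ) = (S.card : ℝ) - ((K ∪ Lsp j).card : ℝ) := by
        rw [Finset.card_sdiff_of_subset hKLS, Nat.cast_sub (Finset.card_le_card hKLS)]
      have hstep : ((Lsp j).card : ℝ) * Δ ^ 2
          ≤ 32 * (Fintype.card V : ℝ) * (((K ∪ Lsp j).card : ℝ)) := by
        have hA : (0:ℝ) ≤ ((Lsp j).card : ℝ) := Nat.cast_nonneg _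
        have h2 : ((Lsp j).card : ℝ) * ((r' : ℝ) - (h : ℝ)) ≤ (Fintype.card V : ℝ) := by
          calc ((Lsp j).card : ℝ) * ((r' : ℝ) - (h : ℝ))
              = (((Lsp j).card * (r' - h) : ℕ) : ℝ) := by
                push_cast [Nat.cast_sub hhle]; ring
            _ ≤ (Fintype.card V : ℝ) := by exact_mod_cast hspan
        have hUc : (h : ℝ) + 1 ≤ (((K ∪ Lsp j).card : ℕ) : ℝ) := by
          have : h + 1 ≤ (K ∪ Lsp j).card :=
            le_trans (le_trans hj1 hcardK) (Finset.card_le_card Finset.subset_union_left)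
          exact_mod_cast this
        calc ((Lsp j).card : ℝ) * Δ ^ 2
            ≤ ((Lsp j).card : ℝ) * (32 * ((h : ℝ) + 1) * ((r' : ℝ) - (h : ℝ))) :=
              mul_le_mul_of_nonneg_left hkey hA
          _ = 32 * ((h : ℝ) + 1) * (((Lsp j).card : ℝ) * ((r' : ℝ) - (h : ℝ))) := by ring
          _ ≤ 32 * ((h : ℝ) + 1) * (Fintype.card V : ℝ) :=
              mul_le_mul_of_nonneg_left h2 (by positivity)
          _ = 32 * (Fintype.card V : ℝ) * ((h : ℝ) + 1) := by ring
          _ ≤ 32 * (Fintype.card V : ℝ) * (((K ∪ Lsp j).card : ℕ) : ℝ) :=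
              mul_le_mul_of_nonneg_left hUc (by positivity)
      have htot := mul_le_mul_of_nonneg_right hcard_union (sq_nonneg Δ)
      refine le_trans htot ?_
      rw [hS'] at hb1
      nlinarith [hb1, hstep]
    · exact Finset.union_subset (Finset.filter_subset _ _) (hb2.trans Finset.sdiff_subset)
    · intro X hX
      rcases List.mem_cons.mp hX with rfl | hX
      · exact hKS
      · exact (hb3 X hX).trans Finset.sdiff_subset
    · intro X hX
      rcases List.mem_cons.mp hX with rfl | hX
      · refine Finset.disjoint_union_left.mpr ⟨hKL.symm, ?_⟩
        exact Finset.disjoint_left.mpr fun a haXs haK =>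
          (Finset.mem_sdiff.mp (hb2 haXs)).2 (Finset.mem_union_left _ haK)
      · refine Finset.disjoint_union_left.mpr ⟨?_, hb4 X hX⟩
        exact Finset.disjoint_left.mpr fun a haL haX =>
          (Finset.mem_sdiff.mp ((hb3 X hX) haX)).2 (Finset.mem_union_right _ haL)
    · refine List.Pairwise.cons ?_ hb5
      intro Y hY
      refine ⟨Finset.disjoint_left.mpr fun a haK haY =>
        (Finset.mem_sdiff.mp ((hb3 Y hY) haY)).2 (Finset.mem_union_left _ haK), ?_⟩
      intro x hx w hw hadj
      have hwS : w ∈ S \ (K ∪ Lsp j) := hb3 Y hY hw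
      exact (Finset.mem_sdiff.mp hwS).2 (hclose x hx w (Finset.mem_sdiff.mp hwS).1 hadj)
    · ext x
      simp only [List.foldr_cons, Finset.mem_union]
      have h6x := Finset.ext_iff.mp hb6 x
      simp only [Finset.mem_union, Finset.mem_sdiff, Finset.mem_union] at h6x
      have hxK : x ∈ K → x ∈ S := fun hx => hKS hx
      have hxL : x ∈ Lsp j → x ∈ S := fun hx => Finset.filter_subset _ _ hx
      tauto
    · intro X hX
      rcases List.mem_cons.mp hX with rfl | hX
      · refine cluster_good G hv (j - 1) Δ ?_ hK
        have hjm : ((j - 1 : ℕ) : ℝ) ≤ (r' : ℝ) - 1 := by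
          have h1 : (j - 1 : ℕ) ≤ r' - 1 := by omega
          have h2 : (((r' - 1 : ℕ)) : ℝ) = (r' : ℝ) - 1 := by
            rw [Nat.cast_sub (by omega : 1 ≤ r')]; norm_num
          calc ((j - 1 : ℕ) : ℝ) ≤ ((r' - 1 : ℕ) : ℝ) := by exact_mod_cast h1
            _ = (r' : ℝ) - 1 := h2
        linarith
      · exact hb7 X hX

end WeakReg

/-- Weak regularity decomposition: every finite graph admits a partition
`V = X* ∪ X₁ ∪ ⋯ ∪ X_t` with `|X*| ≤ 32(|V|/Δ)²`, no edges between distinct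
parts `Xᵢ, Xⱼ`, and each induced subgraph `G[Xᵢ]` connected of diameter ≤ Δ. -/
theorem weak_regularity_partition (V : Type*) [Fintype V] [DecidableEq V]
    (G : SimpleGraph V) (Δ : ℝ) (hΔ : 1 < Δ) :
    ∃ (t : ℕ) (Xstar : Finset V) (Xs : Fin t → Finset V),
      (Xstar.card : ℝ) ≤ 32 * ((Fintype.card V : ℝ) / Δ) ^ 2 ∧
      (∀ i, Disjoint Xstar (Xs i)) ∧
      (∀ i j, i ≠ j → Disjoint (Xs i) (Xs j)) ∧
      (Xstar ∪ Finset.univ.biUnion Xs = Finset.univ) ∧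
      (∀ i j, i ≠ j → ∀ u ∈ Xs i, ∀ v ∈ Xs j, ¬ G.Adj u v) ∧
      (∀ i, ∀ u v : ((Xs i : Set V)),
        (G.induce (Xs i : Set V)).Reachable u v ∧
        (((G.induce (Xs i : Set V)).dist u v : ℝ)) ≤ Δ) := by
  by_cases hsmall : (Fintype.card V : ℝ) ≤ 32 * ((Fintype.card V : ℝ) / Δ) ^ 2
  · refine ⟨0, Finset.univ, fun i => i.elim0, ?_, ?_, ?_, ?_, ?_, ?_⟩
    · simpa [Finset.card_univ] using hsmall
    · intro i; exact i.elim0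
    · intro i; exact i.elim0
    · ext x; simp
    · intro i; exact i.elim0
    · intro i; exact i.elim0
  · push_neg at hsmall
    have hn0 : (0 : ℝ) < (Fintype.card V : ℝ) := lt_of_le_of_lt (by positivity) hsmall
    have hΔpos : (0 : ℝ) < Δ := lt_trans one_pos hΔ
    have hΔsq : (0 : ℝ) < Δ ^ 2 := by positivity
    have hbig : 32 * (Fintype.card V : ℝ) < Δ ^ 2 := by
      have h1 : 32 * ((Fintype.card V : ℝ) ^ 2 / Δ ^ 2) < (Fintype.card V : ℝ) := by
        rw [← div_pow]; exact hsmall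
      have h2 : 32 * (Fintype.card V : ℝ) ^ 2 < (Fintype.card V : ℝ) * Δ ^ 2 := by
        calc 32 * (Fintype.card V : ℝ) ^ 2
            = (32 * ((Fintype.card V : ℝ) ^ 2 / Δ ^ 2)) * Δ ^ 2 := by field_simp
          _ < (Fintype.card V : ℝ) * Δ ^ 2 := mul_lt_mul_of_pos_right h1 hΔsq
      nlinarith
    obtain ⟨L, Xstar, hb1, hb2, hb3, hb4, hb5, hb6, hb7⟩ :=
      WeakReg.main G Δ hΔ hbig Finset.univ
    refine ⟨L.length, Xstar, fun i => L.get i, ?_, ?_, ?_, ?_, ?_, ?_⟩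
    · rw [Finset.card_univ] at hb1
      have h1 : (Xstar.card : ℝ) ≤ 32 * (Fintype.card V : ℝ) * (Fintype.card V : ℝ) / Δ ^ 2 :=
        (le_div_iff₀ hΔsq).mpr hb1
      refine le_trans h1 (le_of_eq ?_)
      field_simp
    · intro i; exact hb4 _ (L.get_mem i)
    · intro i j hij
      rcases lt_or_gt_of_ne hij with hlt | hgt
      · exact (List.pairwise_iff_get.mp hb5 i j hlt).1
      · exact ((List.pairwise_iff_get.mp hb5 j i hgt).1).symm
    · rw [← hb6]
      congr 1
      ext x
      simp only [Finset.mem_biUnion, Finset.mem_univ, true_and, WeakReg.mem_foldr_union]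
      constructor
      · rintro ⟨i, hi⟩; exact ⟨L.get i, L.get_mem i, hi⟩
      · rintro ⟨X, hX, hx⟩
        obtain ⟨i, hi⟩ := List.mem_iff_get.mp hX
        exact ⟨i, hi ▸ hx⟩
    · intro i j hij u hu w hw
      rcases lt_or_gt_of_ne hij with hlt | hgt
      · exact (List.pairwise_iff_get.mp hb5 i j hlt).2 u hu w hw
      · intro hadj
        exact (List.pairwise_iff_get.mp hb5 j i hgt).2 w hw u hu hadj.symm
    · intro i u w
      obtain ⟨q, hq⟩ := hb7 (L.get i) (L.get_mem i) u w
      refine ⟨⟨q⟩, ?_⟩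
      have hd : ((G.induce ((L.get i : Finset V) : Set V)).dist u w : ℝ) ≤ (q.length : ℝ) := by
        exact_mod_cast SimpleGraph.dist_le q
      exact le_trans hd hq
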